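/- Let a, b, c be three distinct symbols of A_q (q ≥ 3). Then the strings a·b·c·a·b·c and a·b·b·c are non-confusable in the (≤3)-tandem-duplication channel: D*(a·b·c·a·b·c) ∩ D*(a·b·b·c) = ∅. -/

import Mathlib

/-- A single tandem duplication of length `k`: `u ++ v ++ w ↦ u ++ v ++ v ++ w` with `|v| = k`. -/
def DupStepLen (q k : ℕ) (x y : List (Fin q)) : Prop :=
  ∃ u v w : List (Fin q), v.length = k ∧ x = u ++ v ++ w ∧ y = u ++ v ++ v ++ w

/-- `DescL q ks x y`: `y` is obtained from `x` by successive tandem duplications whose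
lengths are given by the list `ks`. -/
def DescL (q : ℕ) : List ℕ → List (Fin q) → List (Fin q) → Prop
  | [], x, y => y = x
  | k :: ks, x, y => ∃ z, DupStepLen q k x z ∧ DescL q ks z y

/-- `y ∈ D^t(x)`: `y` is obtained from `x` by `t` tandem duplications, each of length ≤ 3. -/
def DescT (q t : ℕ) (x y : List (Fin q)) : Prop :=
  ∃ ks : List ℕ, ks.length = t ∧ (∀ k ∈ ks, 1 ≤ k ∧ k ≤ 3) ∧ DescL q ks x y

/-- `y` is obtained from `x` by `t` tandem duplications of length ≤ 3, exactly `b` of which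
have length 3. -/
def DescTB (q t b : ℕ) (x y : List (Fin q)) : Prop :=
  ∃ ks : List ℕ, ks.length = t ∧ (∀ k ∈ ks, 1 ≤ k ∧ k ≤ 3) ∧ ks.count 3 = b ∧ DescL q ks x y

/-- `y ∈ D*(x)`: `y` is a descendant of `x` under tandem duplications of length ≤ 3. -/
def Desc (q : ℕ) (x y : List (Fin q)) : Prop := ∃ t, DescT q t x y

/-- Two strings are confusable iff they have a common descendant. -/
def Confusable (q : ℕ) (x y : List (Fin q)) : Prop := ∃ z, Desc q x z ∧ Desc q y z

/-- A zero-error code: a set of pairwise non-confusable strings. -/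
def ZeroErrorCode (q : ℕ) (C : Set (List (Fin q))) : Prop :=
  ∀ x ∈ C, ∀ y ∈ C, x ≠ y → ¬ Confusable q x y

/-- A string is irreducible if it contains no substring `a·a`, `a·b·a·b`, or `a·b·c·a·b·c`. -/
def IrreducibleStr (q : ℕ) (x : List (Fin q)) : Prop :=
  (∀ a : Fin q, ¬ [a, a] <:+: x) ∧
  (∀ a b : Fin q, ¬ [a, b, a, b] <:+: x) ∧
  (∀ a b c : Fin q, ¬ [a, b, c, a, b, c] <:+: x)

/-- `I_q(n)`: the number of irreducible strings of length `n` over the alphabet `A_q`. -/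
noncomputable def IrrCount (q n : ℕ) : ℕ :=
  Set.ncard {x : List (Fin q) | x.length = n ∧ IrreducibleStr q x}

/-- The binary entropy function in base 2 (with `H(0) = H(1) = 0`, since `logb 2 0 = 0`). -/
noncomputable def binH (β : ℝ) : ℝ :=
  -β * Real.logb 2 β - (1 - β) * Real.logb 2 (1 - β)


namespace TypeITypeII

def dA : Fin 13 → Fin 4 → Fin 13 := ![![1, 2, 2, 12], ![1, 3, 2, 12], ![2, 2, 2, 12], ![1, 3, 4, 12], ![5, 6, 4, 12], ![5, 7, 8, 12], ![2, 6, 4, 12], ![9, 7, 10, 12], ![5, 2, 8, 12], ![9, 7, 2, 12], ![5, 11, 10, 12], ![2, 11, 10, 12], ![12, 12, 12, 12]]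
def accA : Fin 13 → Bool := ![false, false, false, false, false, false, false, false, false, false, true, false, false]
def RA : Fin 13 → Fin 13 → Bool := ![![true, true, false, true, true, true, false, true, true, true, true, false, false], ![false, true, false, true, false, true, false, true, false, true, false, false, false], ![true, true, true, true, true, true, true, true, true, true, true, true, true], ![false, false, false, true, false, false, false, true, false, false, false, false, false], ![false, false, false, false, true, false, false, false, false, false, true, false, false], ![false, false, false, false, false, true, false, false, false, false, false, false, false], ![false, false, false, true, true, false, true, true, false, false, true, true, false], ![false, false, false, false, false, false, false, true, false, false, false, false, false], ![false, false, false, false, true, true, false, false, true, false, true, false, false], ![false, false, false, false, false, true, false, true, false, true, false, false, false], ![false, false, false, false, false, false, false, false, false, false, true, false, false], ![false, false, false, false, false, false, false, true, false, false, true, true, false], ![true, true, true, true, true, true, true, true, true, true, true, true, true]]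
def dB : Fin 8 → Fin 4 → Fin 8 := ![![1, 2, 2, 7], ![1, 3, 2, 7], ![2, 2, 2, 7], ![1, 4, 2, 7], ![1, 4, 5, 7], ![2, 6, 5, 7], ![2, 6, 5, 7], ![7, 7, 7, 7]]
def accB : Fin 8 → Bool := ![false, false, false, false, false, true, false, false]
def RB : Fin 8 → Fin 8 → Bool := ![![true, true, false, true, true, false, false, false], ![false, true, false, true, true, false, false, false], ![true, true, true, true, true, true, true, true], ![false, false, false, true, true, false, false, false], ![false, false, false, false, true, false, false, false], ![false, false, false, false, false, true, false, false], ![false, false, false, false, true, true, true, false], ![true, true, true, true, true, true, true, true]]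
def PP : Fin 13 → Fin 8 → Bool := ![![true, false, false, false, false, false, false, false], ![false, true, false, false, false, false, false, false], ![false, false, true, false, false, false, false, false], ![false, false, false, true, true, false, false, false], ![false, false, true, false, false, true, false, false], ![false, false, true, false, false, false, false, false], ![false, false, true, false, false, false, true, false], ![false, false, true, false, false, false, false, false], ![false, false, true, false, false, false, false, false], ![false, false, true, false, false, false, false, false], ![false, false, true, false, false, false, false, false], ![false, false, true, false, false, false, false, false], ![false, false, false, false, false, false, false, true]]

/-- Run a DFA over `Fin 4`. -/
def runD {n : ℕ} (d : Fin n → Fin 4 → Fin n) (s : Fin n) (w : List (Fin 4)) : Fin n :=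
  w.foldl d s

lemma runD_append {n : ℕ} (d : Fin n → Fin 4 → Fin n) (s : Fin n) (u v : List (Fin 4)) :
    runD d s (u ++ v) = runD d (runD d s u) v :=
  List.foldl_append ..

/-- Soundness of a simulation relation: if `R s t` then every word accepted from `s`
is accepted from `t`. -/
lemma sim {n : ℕ} {d : Fin n → Fin 4 → Fin n} {acc : Fin n → Bool} {R : Fin n → Fin n → Bool}
    (hR1 : ∀ s t, R s t = true → acc s = true → acc t = true)
    (hR2 : ∀ s t (l : Fin 4), R s t = true → R (d s l) (d t l) = true) :
    ∀ (w : List (Fin 4)) (s t : Fin n), R s t = true →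
      acc (runD d s w) = true → acc (runD d t w) = true := by
  intro w
  induction w with
  | nil => intro s t h ha; exact hR1 s t h ha
  | cons l w ih =>
      intro s t h ha
      exact ih (d s l) (d t l) (hR2 s t l h) ha

/-- The encoding of `Fin q` into the 4-letter alphabet. -/
def enc {q : ℕ} (a b c : Fin q) (x : Fin q) : Fin 4 :=
  if x = a then 0 else if x = b then 1 else if x = c then 2 else 3

section Pres

variable {q n : ℕ} {d : Fin n → Fin 4 → Fin n} {acc : Fin n → Bool} {R : Fin n → Fin n → Bool}

/-- A single duplication step preserves acceptance, given the closure certificates. -/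
lemma step_pres (e : Fin q → Fin 4)
    (hR1 : ∀ s t, R s t = true → acc s = true → acc t = true)
    (hR2 : ∀ s t (l : Fin 4), R s t = true → R (d s l) (d t l) = true)
    (hC1 : ∀ (s : Fin n) (l1 : Fin 4), R (d s l1) (d (d s l1) l1) = true)
    (hC2 : ∀ (s : Fin n) (l1 l2 : Fin 4),
      R (d (d s l1) l2) (d (d (d (d s l1) l2) l1) l2) = true)
    (hC3 : ∀ (s : Fin n) (l1 l2 l3 : Fin 4),
      R (d (d (d s l1) l2) l3) (d (d (d (d (d (d s l1) l2) l3) l1) l2) l3) = true)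
    {k : ℕ} (hk1 : 1 ≤ k) (hk3 : k ≤ 3) {x y : List (Fin q)}
    (h : DupStepLen q k x y) (s0 : Fin n)
    (ha : acc (runD d s0 (x.map e)) = true) :
    acc (runD d s0 (y.map e)) = true := by
  obtain ⟨u, v, w, hv, hx, hy⟩ := h
  subst hx hy
  simp only [List.map_append] at ha ⊢
  rw [runD_append, runD_append] at ha
  rw [runD_append, runD_append, runD_append]
  set s : Fin n := runD d s0 (u.map e) with hs
  have hRkey : R (runD d s (v.map e)) (runD d (runD d s (v.map e)) (v.map e)) = true := by
    interval_cases k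
    · rcases v with _ | ⟨l1, _ | ⟨l2, v⟩⟩ <;> simp_all [runD]
    · rcases v with _ | ⟨l1, _ | ⟨l2, _ | ⟨l3, v⟩⟩⟩ <;> simp_all [runD]
    · rcases v with _ | ⟨l1, _ | ⟨l2, _ | ⟨l3, _ | ⟨l4, v⟩⟩⟩⟩ <;> simp_all [runD]
  exact sim hR1 hR2 (w.map e) _ _ hRkey ha

/-- A sequence of duplication steps preserves acceptance. -/
lemma descL_pres (e : Fin q → Fin 4)
    (hR1 : ∀ s t, R s t = true → acc s = true → acc t = true)
    (hR2 : ∀ s t (l : Fin 4), R s t = true → R (d s l) (d t l) = true)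
    (hC1 : ∀ (s : Fin n) (l1 : Fin 4), R (d s l1) (d (d s l1) l1) = true)
    (hC2 : ∀ (s : Fin n) (l1 l2 : Fin 4),
      R (d (d s l1) l2) (d (d (d (d s l1) l2) l1) l2) = true)
    (hC3 : ∀ (s : Fin n) (l1 l2 l3 : Fin 4),
      R (d (d (d s l1) l2) l3) (d (d (d (d (d (d s l1) l2) l3) l1) l2) l3) = true)
    (s0 : Fin n) :
    ∀ (ks : List ℕ) (x y : List (Fin q)), (∀ k ∈ ks, 1 ≤ k ∧ k ≤ 3) → DescL q ks x y →
      acc (runD d s0 (x.map e)) = true → acc (runD d s0 (y.map e)) = true := by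
  intro ks
  induction ks with
  | nil => intro x y _ hd ha; rw [hd]; exact ha
  | cons k ks ih =>
      intro x y hks hd ha
      obtain ⟨z, hstep, hrest⟩ := hd
      have hk := hks k List.mem_cons_self
      exact ih z y (fun k' hk' => hks k' (List.mem_cons_of_mem _ hk'))
        hrest (step_pres e hR1 hR2 hC1 hC2 hC3 hk.1 hk.2 hstep s0 ha)

/-- Acceptance is preserved along `Desc`. -/
lemma desc_pres (e : Fin q → Fin 4)
    (hR1 : ∀ s t, R s t = true → acc s = true → acc t = true)
    (hR2 : ∀ s t (l : Fin 4), R s t = true → R (d s l) (d t l) = true)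
    (hC1 : ∀ (s : Fin n) (l1 : Fin 4), R (d s l1) (d (d s l1) l1) = true)
    (hC2 : ∀ (s : Fin n) (l1 l2 : Fin 4),
      R (d (d s l1) l2) (d (d (d (d s l1) l2) l1) l2) = true)
    (hC3 : ∀ (s : Fin n) (l1 l2 l3 : Fin 4),
      R (d (d (d s l1) l2) l3) (d (d (d (d (d (d s l1) l2) l3) l1) l2) l3) = true)
    (s0 : Fin n) {x y : List (Fin q)} (h : Desc q x y)
    (ha : acc (runD d s0 (x.map e)) = true) :
    acc (runD d s0 (y.map e)) = true := by
  obtain ⟨t, ks, _, hks, hd⟩ := h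
  exact descL_pres e hR1 hR2 hC1 hC2 hC3 s0 ks x y hks hd ha

end Pres

/-- The two DFA languages are disjoint. -/
lemma disj : ∀ (w : List (Fin 4)) (s : Fin 13) (t : Fin 8), PP s t = true →
    ¬(accA (runD dA s w) = true ∧ accB (runD dB t w) = true) := by
  intro w
  induction w with
  | nil =>
      intro s t hp
      revert hp
      revert s t
      decide
  | cons l w ih =>
      intro s t hp
      have : PP (dA s l) (dB t l) = true := by revert hp; revert s t l; decide
      exact ih (dA s l) (dB t l) this

end TypeITypeII

/-- for distinct symbols `a, b, c` of `A_q` (`q ≥ 3`), the strings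
`a·b·c·a·b·c` and `a·b·b·c` are non-confusable:
`D*(a·b·c·a·b·c) ∩ D*(a·b·b·c) = ∅`. -/
theorem typeI_typeII_nonconfusable (q : ℕ) (hq : 3 ≤ q) (a b c : Fin q)
    (hab : a ≠ b) (hbc : b ≠ c) (hac : a ≠ c) :
    {z | Desc q [a, b, c, a, b, c] z} ∩ {z | Desc q [a, b, b, c] z} = ∅ := by
  open TypeITypeII in
  rw [Set.eq_empty_iff_forall_notMem]
  rintro z ⟨h1, h2⟩
  simp only [Set.mem_setOf_eq] at h1 h2
  have hba : b ≠ a := Ne.symm hab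
  have hca : c ≠ a := Ne.symm hac
  have hcb : c ≠ b := Ne.symm hbc
  have hRA1 : ∀ s t, RA s t = true → accA s = true → accA t = true := by decide
  have hRA2 : ∀ s t (l : Fin 4), RA s t = true → RA (dA s l) (dA t l) = true := by decide
  have hCA1 : ∀ (s : Fin 13) (l1 : Fin 4), RA (dA s l1) (dA (dA s l1) l1) = true := by decide
  have hCA2 : ∀ (s : Fin 13) (l1 l2 : Fin 4),
      RA (dA (dA s l1) l2) (dA (dA (dA (dA s l1) l2) l1) l2) = true := by decide
  have hCA3 : ∀ (s : Fin 13) (l1 l2 l3 : Fin 4),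
      RA (dA (dA (dA s l1) l2) l3) (dA (dA (dA (dA (dA (dA s l1) l2) l3) l1) l2) l3) = true := by
    decide
  have hRB1 : ∀ s t, RB s t = true → accB s = true → accB t = true := by decide
  have hRB2 : ∀ s t (l : Fin 4), RB s t = true → RB (dB s l) (dB t l) = true := by decide
  have hCB1 : ∀ (s : Fin 8) (l1 : Fin 4), RB (dB s l1) (dB (dB s l1) l1) = true := by decide
  have hCB2 : ∀ (s : Fin 8) (l1 l2 : Fin 4),
      RB (dB (dB s l1) l2) (dB (dB (dB (dB s l1) l2) l1) l2) = true := by decide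
  have hCB3 : ∀ (s : Fin 8) (l1 l2 l3 : Fin 4),
      RB (dB (dB (dB s l1) l2) l3) (dB (dB (dB (dB (dB (dB s l1) l2) l3) l1) l2) l3) = true := by
    decide
  have hmapA : List.map (enc a b c) [a, b, c, a, b, c] = [0, 1, 2, 0, 1, 2] := by
    simp [enc, hba, hca, hcb]
  have hmapB : List.map (enc a b c) [a, b, b, c] = [0, 1, 1, 2] := by
    simp [enc, hba, hca, hcb]
  have haA : accA (runD dA 0 (List.map (enc a b c) [a, b, c, a, b, c])) = true := by
    rw [hmapA]; decide
  have haB : accB (runD dB 0 (List.map (enc a b c) [a, b, b, c])) = true := by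
    rw [hmapB]; decide
  have hzA := desc_pres (enc a b c) hRA1 hRA2 hCA1 hCA2 hCA3 0 h1 haA
  have hzB := desc_pres (enc a b c) hRB1 hRB2 hCB1 hCB2 hCB3 0 h2 haB
  exact disj (List.map (enc a b c) z) 0 0 (by decide) ⟨hzA, hzB⟩
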